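/- arXiv:1802.06207 — 3 statements merged into one kernel-verified Lean document; each statement's English description precedes it below -/
import Mathlib

section
/- If D is a regular language over alphabet Σ such that the sequence of counts |D ∩ Σ^n| is unbounded in n, then the sequence |D ∩ Σ^{≤n}| / n is also unbounded. -/
open Set

namespace CGU

open scoped Classical

variable {A : Type*} {σ : Type*} (M : DFA A σ)

/-- State after reading the first `k` letters of `w`. -/
def st (w : List A) (k : ℕ) : σ := M.evalFrom M.start (w.take k)

/-- `P M w j` : the state after `j` letters has appeared before. -/
def P (w : List A) (j : ℕ) : Prop := ∃ i, i < j ∧ st M w i = st M w j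

noncomputable def J (w : List A) : ℕ := if h : ∃ j, P M w j then Nat.find h else 0

noncomputable def I (w : List A) : ℕ :=
  if h : P M w (J M w) then Nat.find h else 0

variable [Fintype σ]

lemma exists_P {w : List A} (hw : Fintype.card σ ≤ w.length) :
    ∃ j, P M w j ∧ j ≤ Fintype.card σ := by
  obtain ⟨a, b, hab, hfab⟩ :=
    Fintype.exists_ne_map_eq_of_card_lt
      (fun k : Fin (Fintype.card σ + 1) => st M w k)
      (by simp)
  rcases lt_or_gt_of_ne hab with h | h
  · exact ⟨b, ⟨a, h, hfab⟩, Nat.lt_succ_iff.mp b.2⟩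
  · exact ⟨a, ⟨b, h, hfab.symm⟩, Nat.lt_succ_iff.mp a.2⟩

lemma exP {w : List A} (hw : Fintype.card σ ≤ w.length) : ∃ j, P M w j :=
  (exists_P M hw).imp fun _ h => h.1

lemma J_eq_find {w : List A} (h : ∃ j, P M w j) : J M w = Nat.find h := by
  rw [J, dif_pos h]

lemma P_J {w : List A} (hw : Fintype.card σ ≤ w.length) : P M w (J M w) := by
  rw [J_eq_find M (exP M hw)]; exact Nat.find_spec _

lemma J_le {w : List A} (hw : Fintype.card σ ≤ w.length) : J M w ≤ Fintype.card σ := by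
  obtain ⟨j, hj, hjs⟩ := exists_P M hw
  rw [J_eq_find M (exP M hw)]
  exact le_trans (Nat.find_le hj) hjs

lemma not_P_lt {w : List A} (hw : Fintype.card σ ≤ w.length) {k : ℕ} (hk : k < J M w) :
    ¬ P M w k := by
  rw [J_eq_find M (exP M hw)] at hk
  exact Nat.find_min _ hk

lemma I_spec {w : List A} (hw : Fintype.card σ ≤ w.length) :
    I M w < J M w ∧ st M w (I M w) = st M w (J M w) := by
  rw [I, dif_pos (P_J M hw)]
  exact Nat.find_spec (P_J M hw)

lemma st_take {w u : List A} {n k : ℕ} (h : u.take n = w.take n) (hk : k ≤ n) :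
    st M u k = st M w k := by
  unfold st
  have : u.take k = w.take k := by
    rw [← min_eq_left hk, ← List.take_take, h, List.take_take, min_eq_left hk]
  rw [this]

lemma J_of_take {w u : List A} (hw : Fintype.card σ ≤ w.length)
    (hu : u.take (J M w) = w.take (J M w)) : J M u = J M w := by
  obtain ⟨i, hi, hst⟩ := P_J M hw
  have hPu : P M u (J M w) :=
    ⟨i, hi, by rw [st_take M hu hi.le, st_take M hu le_rfl]; exact hst⟩
  rw [J_eq_find M ⟨_, hPu⟩, Nat.find_eq_iff]
  refine ⟨hPu, fun m hm ⟨i', hi', hst'⟩ => ?_⟩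
  exact not_P_lt M hw hm
    ⟨i', hi', by
      rw [← st_take M hu (le_of_lt (lt_trans hi' hm)), ← st_take M hu hm.le]
      exact hst'⟩

/-- The loop word. -/
noncomputable def Y (w : List A) : List A := (w.take (J M w)).drop (I M w)

/-- Pump `w` by inserting `q / |Y|` copies of the loop after position `J`. -/
noncomputable def pump (q : ℕ) (w : List A) : List A :=
  w.take (J M w) ++ (List.replicate (q / (Y M w).length) (Y M w)).flatten ++ w.drop (J M w)

lemma flatten_replicate_length (m : ℕ) (y : List A) :
    (List.replicate m y).flatten.length = m * y.length := by
  induction m with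
  | zero => simp
  | succ k ih => simp [List.replicate_succ, ih, Nat.succ_mul, Nat.add_comm]

lemma Y_length {w : List A} (hw : Fintype.card σ ≤ w.length) :
    (Y M w).length = J M w - I M w := by
  have hJ : J M w ≤ w.length := le_trans (J_le M hw) hw
  simp [Y, min_eq_left hJ]

lemma Y_dvd {w : List A} (hw : Fintype.card σ ≤ w.length) :
    (Y M w).length ∣ (Nat.factorial (Fintype.card σ)) := by
  rw [Y_length M hw]
  exact Nat.dvd_factorial
    (Nat.sub_pos_of_lt (I_spec M hw).1)
    (le_trans (Nat.sub_le _ _) (J_le M hw))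

lemma pump_length {w : List A} (hw : Fintype.card σ ≤ w.length) :
    (pump M ((Nat.factorial (Fintype.card σ))) w).length = w.length + (Nat.factorial (Fintype.card σ)) := by
  have hJ : J M w ≤ w.length := le_trans (J_le M hw) hw
  have hdvd := Y_dvd M hw
  simp only [pump, List.length_append, flatten_replicate_length, List.length_take,
    List.length_drop, min_eq_left hJ, Nat.div_mul_cancel hdvd]
  omega

lemma take_eq_take_append_Y {w : List A} (hw : Fintype.card σ ≤ w.length) :
    w.take (J M w) = w.take (I M w) ++ Y M w := by
  have hIJ : I M w ≤ J M w := (I_spec M hw).1.le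
  rw [Y]
  conv_lhs => rw [← List.take_append_drop (I M w) (w.take (J M w))]
  rw [List.take_take, min_eq_left hIJ]

lemma evalFrom_Y {w : List A} (hw : Fintype.card σ ≤ w.length) :
    M.evalFrom (st M w (J M w)) (Y M w) = st M w (J M w) := by
  have h2 : M.evalFrom (st M w (I M w)) (Y M w) = st M w (J M w) := by
    show M.evalFrom (M.evalFrom M.start (w.take (I M w))) (Y M w)
      = M.evalFrom M.start (w.take (J M w))
    rw [← DFA.evalFrom_of_append, ← take_eq_take_append_Y M hw]
  have e := (I_spec M hw).2
  rw [← e]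
  exact h2.trans e.symm

lemma evalFrom_flatten_replicate {s : σ} {y : List A} (h : M.evalFrom s y = s) (m : ℕ) :
    M.evalFrom s (List.replicate m y).flatten = s := by
  induction m with
  | zero => simp [DFA.evalFrom]
  | succ k ih => rw [List.replicate_succ, List.flatten_cons, DFA.evalFrom_of_append, h, ih]

lemma pump_accepts {w : List A} (hw : Fintype.card σ ≤ w.length)
    (hacc : w ∈ M.accepts) (q : ℕ) : pump M q w ∈ M.accepts := by
  have hloop : M.evalFrom (st M w (J M w))
      (List.replicate (q / (Y M w).length) (Y M w)).flatten = st M w (J M w) :=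
    evalFrom_flatten_replicate M (evalFrom_Y M hw) _
  have key : M.evalFrom M.start (pump M q w) = M.evalFrom M.start w := by
    conv_rhs => rw [← List.take_append_drop (J M w) w]
    rw [pump, DFA.evalFrom_of_append, DFA.evalFrom_of_append, DFA.evalFrom_of_append]
    have hst : M.evalFrom M.start (w.take (J M w)) = st M w (J M w) := rfl
    rw [hst, hloop]
  rw [DFA.mem_accepts] at hacc ⊢
  show M.evalFrom M.start (pump M q w) ∈ M.accept
  rw [key]
  exact hacc

lemma pump_take {w : List A} (hw : Fintype.card σ ≤ w.length) (q : ℕ) :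
    (pump M q w).take (J M w) = w.take (J M w) := by
  have hJ : J M w ≤ w.length := le_trans (J_le M hw) hw
  rw [pump, List.append_assoc, List.take_append_of_le_length (by
    simp [min_eq_left hJ])]
  simp [min_eq_left hJ]

lemma pump_recover {w : List A} (hw : Fintype.card σ ≤ w.length) :
    (pump M ((Nat.factorial (Fintype.card σ))) w).take (J M (pump M ((Nat.factorial (Fintype.card σ))) w)) ++
      (pump M ((Nat.factorial (Fintype.card σ))) w).drop
        (J M (pump M ((Nat.factorial (Fintype.card σ))) w) + (Nat.factorial (Fintype.card σ))) = w := by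
  set q := (Nat.factorial (Fintype.card σ))
  have hJ : J M w ≤ w.length := le_trans (J_le M hw) hw
  have htake := pump_take M hw q
  have hJu : J M (pump M q w) = J M w := J_of_take M hw htake
  rw [hJu, htake]
  have hdrop : (pump M q w).drop (J M w + q) = w.drop (J M w) := by
    have hlen : (w.take (J M w) ++
        (List.replicate (q / (Y M w).length) (Y M w)).flatten).length = J M w + q := by
      simp [flatten_replicate_length, min_eq_left hJ, Nat.div_mul_cancel (Y_dvd M hw)]
      exact Nat.div_mul_cancel (Y_dvd M hw)
    rw [pump, ← hlen, List.drop_left]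
  rw [hdrop, List.take_append_drop]

end CGU

open CGU in
/-- If `D` is regular and the counts `|D ∩ Σ^n|` are unbounded in `n`, then
`|D ∩ Σ^{≤n}| / n` is also unbounded. -/
theorem cumulative_growth_unbounded {A : Type*} [Fintype A]
    (D : Language A) (hD : D.IsRegular)
    (hub : ∀ c : ℕ, ∃ n : ℕ, c < { w : List A | w ∈ D ∧ w.length = n }.ncard) :
    ∀ c : ℕ, ∃ n : ℕ, 0 < n ∧ c * n < { w : List A | w ∈ D ∧ w.length ≤ n }.ncard := by
  obtain ⟨σ, hσ, M, hM⟩ := hD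
  set s := Fintype.card σ with hs
  set q := Nat.factorial s with hq
  have hq1 : 1 ≤ q := Nat.one_le_iff_ne_zero.mpr (Nat.factorial_ne_zero s)
  set a : ℕ → ℕ := fun n => { w : List A | w ∈ D ∧ w.length = n }.ncard with ha
  -- finiteness
  have hEfin : ∀ n : ℕ, { w : List A | w ∈ D ∧ w.length = n }.Finite := fun n =>
    (List.finite_length_eq A n).subset fun w hw => hw.2
  have hSfin : ∀ n : ℕ, { w : List A | w ∈ D ∧ w.length ≤ n }.Finite := fun n =>
    (List.finite_length_le A n).subset fun w hw => hw.2
  -- the step lemma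
  have hstep : ∀ n : ℕ, s ≤ n → a n ≤ a (n + q) := by
    intro n hn
    refine Set.ncard_le_ncard_of_injOn (pump M q) ?_ ?_ (hEfin (n + q))
    · rintro w ⟨hwD, hwlen⟩
      have hw : s ≤ w.length := hwlen ▸ hn
      refine ⟨?_, ?_⟩
      · rw [← hM] at hwD ⊢; exact pump_accepts M hw hwD q
      · rw [hq, pump_length M hw, hwlen]
    · rintro w1 ⟨hw1D, hw1len⟩ w2 ⟨hw2D, hw2len⟩ hpe
      have h1 : s ≤ w1.length := hw1len ▸ hn
      have h2 : s ≤ w2.length := hw2len ▸ hn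
      have := pump_recover M h1
      rw [hpe, pump_recover M h2] at this
      exact this.symm
  -- monotone along the arithmetic progression
  have hap : ∀ n0 : ℕ, s ≤ n0 → ∀ k : ℕ, a n0 ≤ a (n0 + k * q) := by
    intro n0 hn0 k
    induction k with
    | zero => simp
    | succ m ih =>
      have : n0 + (m + 1) * q = (n0 + m * q) + q := by ring
      rw [this]
      exact le_trans ih (hstep _ (le_trans hn0 (Nat.le_add_right _ _)))
  -- cumulative lower bound
  have hcum : ∀ n0 : ℕ, s ≤ n0 → ∀ K : ℕ,
      (K + 1) * a n0 ≤ { w : List A | w ∈ D ∧ w.length ≤ n0 + K * q }.ncard := by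
    intro n0 hn0 K
    induction K with
    | zero =>
      simp only [Nat.zero_add, one_mul, Nat.zero_mul, Nat.add_zero]
      exact Set.ncard_le_ncard (fun w hw => ⟨hw.1, hw.2.le⟩) (hSfin n0)
    | succ m ih =>
      have hdisj : Disjoint { w : List A | w ∈ D ∧ w.length ≤ n0 + m * q }
          { w : List A | w ∈ D ∧ w.length = n0 + (m + 1) * q } := by
        rw [Set.disjoint_left]
        rintro w ⟨_, hle⟩ ⟨_, heq⟩
        have : n0 + (m + 1) * q ≤ n0 + m * q := heq ▸ hle
        have : (m + 1) * q ≤ m * q := by omega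
        nlinarith [hq1]
      have hsub : { w : List A | w ∈ D ∧ w.length ≤ n0 + m * q } ∪
          { w : List A | w ∈ D ∧ w.length = n0 + (m + 1) * q } ⊆
          { w : List A | w ∈ D ∧ w.length ≤ n0 + (m + 1) * q } := by
        rintro w (⟨h1, h2⟩ | ⟨h1, h2⟩)
        · exact ⟨h1, le_trans h2 (by nlinarith [hq1])⟩
        · exact ⟨h1, h2.le⟩
      calc (m + 1 + 1) * a n0 = (m + 1) * a n0 + a n0 := by ring
        _ ≤ { w : List A | w ∈ D ∧ w.length ≤ n0 + m * q }.ncard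
            + { w : List A | w ∈ D ∧ w.length = n0 + (m + 1) * q }.ncard := by
            refine Nat.add_le_add ih ?_
            have := hap n0 hn0 (m + 1)
            exact this
        _ = ({ w : List A | w ∈ D ∧ w.length ≤ n0 + m * q } ∪
            { w : List A | w ∈ D ∧ w.length = n0 + (m + 1) * q }).ncard :=
            (Set.ncard_union_eq hdisj (hSfin _) (hEfin _)).symm
        _ ≤ _ := Set.ncard_le_ncard hsub (hSfin _)
  -- bound for small lengths
  set B : ℕ := { w : List A | w.length ≤ s }.ncard with hB
  have hsmall : ∀ n : ℕ, n ≤ s → a n ≤ B :=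
    fun n hn => Set.ncard_le_ncard
      (fun w hw => le_trans (le_of_eq hw.2) hn) (List.finite_length_le A s)
  intro c
  obtain ⟨n0, hn0⟩ := hub (max B (c * (q + 1)))
  have haB : B < a n0 := lt_of_le_of_lt (le_max_left _ _) hn0
  have hac : c * (q + 1) < a n0 := lt_of_le_of_lt (le_max_right _ _) hn0
  have hsn0 : s < n0 := by
    by_contra h
    exact absurd (hsmall n0 (not_lt.mp h)) (not_le.mpr haB)
  refine ⟨n0 + n0 * q, Nat.lt_of_lt_of_le (by omega) (Nat.le_add_right _ _), ?_⟩
  have hcum' := hcum n0 hsn0.le n0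
  have key : c * (n0 + n0 * q) < (n0 + 1) * a n0 := by
    have : c * (q + 1) + 1 ≤ a n0 := hac
    nlinarith
  exact lt_of_lt_of_le key hcum'
end

section
/- For a regular language D over a finite alphabet Σ, if there exists a constant c such that |D ∩ Σ^{≤n}| ≤ c·n + c for all n, then there exists a constant c' such that |D ∩ Σ^n| ≤ c' for all n. -/
lemma flatten_replicate_length {A : Type*} (m : ℕ) (b : List A) :
    (List.replicate m b).flatten.length = m * b.length := by
  induction m with
  | zero => simp
  | succ m ih => simp [List.replicate_succ, ih]; ring

lemma pump_aux {A σ : Type*} [Fintype σ] (M : DFA A σ) {w : List A}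
    (hw : w ∈ M.accepts) (hlen : Fintype.card σ ≤ w.length) :
    ∃ a b c : List A, w = a ++ b ++ c ∧ a.length < Fintype.card σ ∧
      b.length ∣ (Fintype.card σ).factorial ∧
      ∀ m : ℕ, a ++ ((List.replicate m b).flatten ++ c) ∈ M.accepts := by
  obtain ⟨a, b, c, hsplit, hle, hb, hsub⟩ := M.pumping_lemma hw hlen
  have hbpos : 0 < b.length := List.length_pos_iff.mpr hb
  refine ⟨a, b, c, hsplit, by omega, Nat.dvd_factorial hbpos (by omega), fun m => ?_⟩
  apply hsub
  rw [← List.append_assoc]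
  exact Language.append_mem_mul
    (Language.append_mem_mul rfl
      (Language.join_mem_kstar fun y hy =>
        Set.mem_singleton_iff.mpr (List.eq_of_mem_replicate hy))) rfl

/-- If `D` is regular and `|D ∩ Σ^{≤n}| ≤ c·n + c` for all `n`, then the slice sizes
`|D ∩ Σ^n|` are bounded by some constant `c'`. -/
theorem linear_cumulative_growth_bounded_slices {A : Type*} [Fintype A]
    (D : Language A) (hD : D.IsRegular) (c : ℕ)
    (hlin : ∀ n : ℕ, { w : List A | w ∈ D ∧ w.length ≤ n }.ncard ≤ c * n + c) :
    ∃ c' : ℕ, ∀ n : ℕ, { w : List A | w ∈ D ∧ w.length = n }.ncard ≤ c' := by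
  classical
  obtain ⟨σ, instF, M, hM⟩ := hD
  haveI := instF
  set k := Fintype.card σ with hkdef
  have hk1 : 1 ≤ k := Fintype.card_pos_iff.mpr ⟨M.start⟩
  set P := k.factorial with hPdef
  have hP1 : 1 ≤ P := k.factorial_pos
  have hfin : ∀ N : ℕ, {w : List A | w ∈ D ∧ w.length ≤ N}.Finite := fun N =>
    (List.finite_length_le A N).subset fun w hw => hw.2
  refine ⟨c * k + c + (c * (1 + P) + c) * k, fun n => ?_⟩
  by_cases hn : n < k
  · have h1 : {w : List A | w ∈ D ∧ w.length = n}.ncard ≤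
        {w : List A | w ∈ D ∧ w.length ≤ n}.ncard :=
      Set.ncard_le_ncard (fun w hw => ⟨hw.1, hw.2.le⟩) (hfin n)
    have h2 := hlin n
    have h3 : c * n ≤ c * k := Nat.mul_le_mul_left c hn.le
    omega
  · push_neg at hn
    have hn1 : 1 ≤ n := le_trans hk1 hn
    set S := {w : List A | w ∈ D ∧ w.length = n} with hSdef
    set N := n + n * P with hNdef
    set T := {w : List A | w ∈ D ∧ w.length ≤ N} with hTdef
    have hch : ∀ w : ↥S, ∃ a b c : List A, (w : List A) = a ++ b ++ c ∧
        a.length < k ∧ b.length ∣ P ∧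
        ∀ m : ℕ, a ++ ((List.replicate m b).flatten ++ c) ∈ D := by
      rintro ⟨w, hwD, hwlen⟩
      obtain ⟨a, b, c, h1, h2, h3, h4⟩ := pump_aux M
        (show w ∈ M.accepts from hM ▸ hwD) (by rw [hwlen]; exact hn)
      exact ⟨a, b, c, h1, h2, h3, fun m => hM ▸ h4 m⟩
    choose fa fb fc hsplit hla hdvd hmem using hch
    have hU : ∀ (w : ↥S) (i : Fin n), ∃ u : List A, u ∈ D ∧
        u.length = n + (i.1 + 1) * P ∧
        (w : List A) = u.take (fa w).length ++ u.drop ((fa w).length + (u.length - n)) := by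
      intro w i
      set q := P / (fb w).length with hq
      have hqP : q * (fb w).length = P := Nat.div_mul_cancel (hdvd w)
      have hwn : (fa w).length + (fb w).length + (fc w).length = n := by
        have h1 := congrArg List.length (hsplit w)
        have h2 : (w : List A).length = n := w.2.2
        simp [List.length_append] at h1
        omega
      refine ⟨fa w ++ ((List.replicate (1 + (i.1 + 1) * q) (fb w)).flatten ++ fc w),
        hmem w _, ?_, ?_⟩
      · simp only [List.length_append, flatten_replicate_length]
        have : (1 + (i.1 + 1) * q) * (fb w).length =
            (fb w).length + (i.1 + 1) * P := by
          rw [add_mul, one_mul, mul_assoc, hqP]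
        rw [this]
        omega
      · have hJ : (List.replicate (1 + (i.1 + 1) * q) (fb w)).flatten =
            (List.replicate ((i.1 + 1) * q) (fb w)).flatten ++ fb w := by
          rw [Nat.add_comm, List.replicate_succ', List.flatten_append]
          simp
        have hBJ : (List.replicate ((i.1 + 1) * q) (fb w)).flatten.length
            = (i.1 + 1) * P := by
          rw [flatten_replicate_length, mul_assoc, hqP]
        have hlentot : (fa w ++ ((List.replicate (1 + (i.1 + 1) * q) (fb w)).flatten
            ++ fc w)).length = n + (i.1 + 1) * P := by
          simp only [List.length_append, flatten_replicate_length]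
          have : (1 + (i.1 + 1) * q) * (fb w).length =
              (fb w).length + (i.1 + 1) * P := by
            rw [add_mul, one_mul, mul_assoc, hqP]
          rw [this]; omega
        rw [hlentot]
        have hsub : n + (i.1 + 1) * P - n = (i.1 + 1) * P := by omega
        rw [hsub, List.take_left]
        have hrearr : fa w ++ ((List.replicate (1 + (i.1 + 1) * q) (fb w)).flatten
            ++ fc w) = (fa w ++ (List.replicate ((i.1 + 1) * q) (fb w)).flatten)
            ++ (fb w ++ fc w) := by
          rw [hJ]; simp [List.append_assoc]
        rw [hrearr]
        have hlen2 : (fa w ++ (List.replicate ((i.1 + 1) * q) (fb w)).flatten).length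
            = (fa w).length + (i.1 + 1) * P := by
          simp [List.length_append, hBJ]
        rw [← hlen2, List.drop_left]
        rw [hsplit w, List.append_assoc]
    choose U hU1 hU2 hU3 using hU
    haveI : Finite ↥T := (hfin N).to_subtype
    have hUmem : ∀ (w : ↥S) (i : Fin n), U w i ∈ T := by
      intro w i
      refine ⟨hU1 w i, ?_⟩
      rw [hU2 w i]
      have : (i.1 + 1) * P ≤ n * P := Nat.mul_le_mul_right P (by omega)
      omega
    set F : ↥S × Fin n → ↥T × Fin k := fun p =>
      (⟨U p.1 p.2, hUmem p.1 p.2⟩, ⟨(fa p.1).length, hla p.1⟩) with hFdef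
    have hinj : Function.Injective F := by
      rintro ⟨w, i⟩ ⟨w', i'⟩ h
      have hu : U w i = U w' i' := congrArg (fun x => (x.1 : List A)) h
      have hlaeq : (fa w).length = (fa w').length := congrArg (fun x => (x.2 : ℕ)) h
      have hlen : n + (i.1 + 1) * P = n + (i'.1 + 1) * P := by
        rw [← hU2 w i, ← hU2 w' i', hu]
      have hii : i.1 + 1 = i'.1 + 1 :=
        Nat.eq_of_mul_eq_mul_right (by omega) (Nat.add_left_cancel hlen)
      have hie : i = i' := Fin.ext (by omega)
      subst hie
      have hww : (w : List A) = (w' : List A) := by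
        rw [hU3 w i, hU3 w' i, hu, hlaeq]
      exact Prod.ext (Subtype.ext hww) rfl
    have key : S.ncard * n ≤ (c * N + c) * k := by
      calc S.ncard * n = Nat.card (↥S × Fin n) := by
            rw [Nat.card_prod, Nat.card_coe_set_eq, Nat.card_eq_fintype_card,
              Fintype.card_fin]
        _ ≤ Nat.card (↥T × Fin k) := Nat.card_le_card_of_injective F hinj
        _ = T.ncard * k := by
            rw [Nat.card_prod, Nat.card_coe_set_eq, Nat.card_eq_fintype_card,
              Fintype.card_fin]
        _ ≤ (c * N + c) * k := Nat.mul_le_mul_right k (hlin N)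
    have h2 : S.ncard * n ≤ ((c * (1 + P) + c) * k) * n := by
      refine key.trans ?_
      have hstep : c * N + c ≤ (c * (1 + P) + c) * n := by
        have : c ≤ c * n := Nat.le_mul_of_pos_right c (by omega)
        calc c * N + c = c * (n + n * P) + c := by rw [hNdef]
          _ ≤ c * (n + n * P) + c * n := by omega
          _ = (c * (1 + P) + c) * n := by ring
      calc (c * N + c) * k ≤ ((c * (1 + P) + c) * n) * k :=
            Nat.mul_le_mul_right k hstep
        _ = ((c * (1 + P) + c) * k) * n := by ring
    have h3 : S.ncard ≤ (c * (1 + P) + c) * k :=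
      Nat.le_of_mul_le_mul_right h2 (by omega)
    exact h3.trans (Nat.le_add_left _ _)
end

section
/- Let D ⊆ Σ* be regular, x ∈ Σ* with |x| ≥ p (the pumping constant of D) such that x has at least one extension in D. Write x = u v w with |v| ≥ 1 such that x and u v^r w are right-syntactically equivalent for all r ≥ 0 (i.e., for all y, x·y ∈ D ⟺ u v^r w·y ∈ D). Then for any finite set S of suffixes with x·s ∈ D for all s ∈ S, the words u v^r w s for 0 ≤ r ≤ n, s ∈ S are pairwise distinct elements of D, so |D ∩ Σ^{≤ |x| + n|v| + max_{s∈S}|s|}| ≥ (n+1)·|S|. -/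
/-- If `x = u v w` with `v` nonempty and `x` right-syntactically equivalent to `u v^r w`
for all `r` (with respect to `D`), then, for a finite set `S` of suffixes of a common
length `ℓ` with `x·s ∈ D` for all `s ∈ S`, the words `u v^r w s` (`0 ≤ r ≤ n`, `s ∈ S`)
are pairwise distinct elements of `D`, so
`|D ∩ Σ^{≤ |x| + n|v| + ℓ}| ≥ (n+1)·|S|`. -/
theorem pumped_words_count_lower_bound {A : Type*} [Fintype A]
    (D : Language A) (hD : D.IsRegular)
    (x u v w : List A) (hx : x = u ++ v ++ w) (hv : 1 ≤ v.length)
    (hsyn : ∀ (r : ℕ) (y : List A),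
      (x ++ y ∈ D ↔ u ++ (List.replicate r v).flatten ++ w ++ y ∈ D))
    (S : Finset (List A)) (ℓ : ℕ) (hlen : ∀ s ∈ S, s.length = ℓ)
    (hmem : ∀ s ∈ S, x ++ s ∈ D) (n : ℕ) :
    (n + 1) * S.card ≤
      { z : List A | z ∈ D ∧ z.length ≤ x.length + n * v.length + ℓ }.ncard := by
  classical
  set N := x.length + n * v.length + ℓ with hN
  set f : ℕ × List A → List A := fun p => u ++ (List.replicate p.1 v).flatten ++ w ++ p.2
    with hf
  have hfinite : { z : List A | z ∈ D ∧ z.length ≤ N }.Finite :=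
    (List.finite_length_le A N).subset (fun z hz => hz.2)
  have hflen : ∀ r s, (f (r, s)).length
      = u.length + r * v.length + w.length + s.length := by
    intro r s
    simp [hf, List.length_flatten, List.map_replicate, mul_comm]; ring
  have hxlen : x.length = u.length + v.length + w.length := by simp [hx]; ring
  have hinj : Set.InjOn f ↑((Finset.range (n + 1)) ×ˢ S) := by
    rintro ⟨r, s⟩ hrs ⟨r', s'⟩ hrs' heq
    simp only [Finset.coe_mem, Finset.mem_coe, Finset.mem_product, Finset.mem_range] at hrs hrs'
    have hlens : s.length = s'.length := by
      rw [hlen s hrs.2, hlen s' hrs'.2]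
    have hlength := congrArg List.length heq
    rw [hflen, hflen, hlens] at hlength
    have hr : r = r' := by
      have : r * v.length = r' * v.length := by omega
      exact Nat.eq_of_mul_eq_mul_right hv this
    subst hr
    have : s = s' := by
      simpa [hf] using heq
    simp [this]
  have hmemf : ∀ p ∈ (Finset.range (n + 1)) ×ˢ S,
      f p ∈ { z : List A | z ∈ D ∧ z.length ≤ N } := by
    rintro ⟨r, s⟩ hrs
    simp only [Finset.mem_product, Finset.mem_range] at hrs
    constructor
    · have := (hsyn r s).mp (hmem s hrs.2)
      simpa [hf] using this
    · rw [hflen, hlen s hrs.2, hN, hxlen]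
      have : r * v.length ≤ n * v.length := Nat.mul_le_mul_right _ (by omega)
      omega
  calc (n + 1) * S.card = ((Finset.range (n + 1)) ×ˢ S).card := by
        simp [Finset.card_product]
    _ = (Finset.image f ((Finset.range (n + 1)) ×ˢ S)).card :=
        (Finset.card_image_of_injOn hinj).symm
    _ ≤ { z : List A | z ∈ D ∧ z.length ≤ N }.ncard := by
        rw [← Set.ncard_coe_finset]
        apply Set.ncard_le_ncard _ hfinite
        intro z hz
        simp only [Finset.coe_image, Set.mem_image, Finset.mem_coe] at hz
        obtain ⟨p, hp, rfl⟩ := hz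
        exact hmemf p hp
end
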